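/- arXiv:2511.20984 — 2 statements merged into one kernel-verified Lean document; each statement's English description precedes it below -/
import Mathlib

section
/- For any impartial game with activeness G^g: if type(G^g)=0 then 𝒢^𝟘(G^g)=ℤ≥0; if type(G^g)=1_{∃0} then 𝒢^𝟘(G^g)=∅; and if type(G^g)=1_{∀1} then 𝒢^𝟘(G^g) is the singleton {mex ∪ 𝒢^𝟘(G'^{g'})} where the union is over options G'^{g'} of G^g with type(G'^{g'})=1_{∀1}. -/
inductive AGame : Type where
  | mk : List AGame → Bool → AGame

namespace AGame

noncomputable instance : DecidableEq AGame := Classical.decEq _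

def opts : AGame → List AGame | mk gs _ => gs
def act : AGame → Bool | mk _ g => g

theorem sizeOf_lt_of_mem {G G' : AGame} (h : G' ∈ G.opts) : sizeOf G' < sizeOf G := by
  cases G with
  | mk gs g =>
    simp only [opts] at h
    have := List.sizeOf_lt_of_mem h
    simp [AGame.mk.sizeOf_spec]
    omega

/-- Disjunctive sum of games with activeness. -/
def add (G H : AGame) : AGame :=
  mk (G.opts.attach.map (fun x => add x.1 H) ++
      H.opts.attach.map (fun y => add G y.1)) (G.act || H.act)
termination_by sizeOf G + sizeOf H
decreasing_by
  · have := sizeOf_lt_of_mem x.2; omega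
  · have := sizeOf_lt_of_mem y.2; omega

/-- `PPos G` means the outcome of `G` is 𝒫 (second player wins). -/
def PPos (G : AGame) : Prop :=
  G.act = false ∨ ∀ G' ∈ G.opts.attach, ¬ PPos G'.1
termination_by sizeOf G
decreasing_by
  have := sizeOf_lt_of_mem G'.2; omega

/-- Hereditary set-equality (the paper's ≅). -/
def Identical (G H : AGame) : Prop :=
  G.act = H.act ∧ (∀ G' ∈ G.opts.attach, ∃ H' ∈ H.opts.attach, Identical G'.1 H'.1)
              ∧ (∀ H' ∈ H.opts.attach, ∃ G' ∈ G.opts.attach, Identical G'.1 H'.1)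
termination_by sizeOf G + sizeOf H
decreasing_by
  · have := sizeOf_lt_of_mem G'.2; have := sizeOf_lt_of_mem H'.2; omega
  · have := sizeOf_lt_of_mem G'.2; have := sizeOf_lt_of_mem H'.2; omega

/-- Equivalence of games with activeness: same outcome in every sum. -/
def Equiv (G H : AGame) : Prop := ∀ X : AGame, (PPos (add G X) ↔ PPos (add H X))

end AGame

namespace AGame

/-- Nimbers with activeness: `star γ n ≅ {star γ j : j < n}^{γ n}`. -/
def star (γ : ℕ → Bool) : ℕ → AGame
  | n => mk ((List.range n).attach.map (fun j => star γ j.1)) (γ n)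
termination_by n => n
decreasing_by
  have := j.2; simp [List.mem_range] at this; omega

/-- The generalized Grundy set `𝒢^γ(G)`. -/
def GSet (γ : ℕ → Bool) (G : AGame) : Set ℕ := {n | PPos (add G (star γ n))}

/-- Minimum excludant of a set of naturals. -/
noncomputable def mex (S : Set ℕ) : ℕ := sInf {n | n ∉ S}

/-- Ordinary Grundy value, computed ignoring activeness. -/
noncomputable def grundy (G : AGame) : ℕ :=
  mex {m | ∃ G' ∈ G.opts.attach, grundy G'.1 = m}
termination_by sizeOf G
decreasing_by
  have := sizeOf_lt_of_mem G'.2; omega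

/-- The three types of games with activeness. -/
inductive AType : Type where
  | inactive : AType            -- type 0
  | activeSomeInactive : AType  -- type 1_{∃0}
  | activeAllActive : AType     -- type 1_{∀1}

open Classical in
/-- `type(G^g)`. -/
noncomputable def typ (G : AGame) : AType :=
  if G.act = false then .inactive
  else if ∃ G' ∈ G.opts, G'.act = false then .activeSomeInactive
  else .activeAllActive

/-- Formal birthday `b(G)`. -/
def bday (G : AGame) : ℕ :=
  (G.opts.attach.map (fun G' => bday G'.1 + 1)).foldr max 0
termination_by sizeOf G
decreasing_by
  have := sizeOf_lt_of_mem G'.2; omega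

/-- An option `G'` of `G` is reversible if it has an option equivalent to `G`. -/
def Reversible (G G' : AGame) : Prop := ∃ G'' ∈ G'.opts, Equiv G'' G

/-- A canonical game: all options canonical and no option reversible. -/
def Canonical (G : AGame) : Prop :=
  (∀ G' ∈ G.opts.attach, Canonical G'.1) ∧ (∀ G' ∈ G.opts, ¬ Reversible G G')
termination_by sizeOf G
decreasing_by
  have := sizeOf_lt_of_mem G'.2; omega

/-- A transitive game: all options transitive and options of options are options. -/
def TransGame (G : AGame) : Prop :=
  (∀ G' ∈ G.opts.attach, TransGame G'.1) ∧ (∀ G' ∈ G.opts, ∀ G'' ∈ G'.opts, G'' ∈ G.opts)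
termination_by sizeOf G
decreasing_by
  have := sizeOf_lt_of_mem G'.2; omega

/-- `G` is covered by `H` if every option of `G` is equivalent to some option of `H`. -/
def Covered (G H : AGame) : Prop := ∀ G' ∈ G.opts, ∃ H' ∈ H.opts, Equiv G' H'

/-- The relation `G ⋈ H`. -/
def Bowtie (G H : AGame) : Prop :=
  (∀ G' ∈ G.opts, ¬ Equiv G' H) ∧ (∀ H' ∈ H.opts, ¬ Equiv G H')

/-- The linear chain `∅^{g₀ g₁ … gₙ}`. -/
def chain (g : ℕ → Bool) : ℕ → AGame
  | 0 => mk [] (g 0)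
  | n + 1 => mk [chain g n] (g (n + 1))

end AGame
namespace AGame

lemma act_add (G H : AGame) : (add G H).act = (G.act || H.act) := by
  rw [add]; rfl

lemma attach_map_fst {α β} (l : List α) (f : α → β) :
    l.attach.map (fun x => f x.1) = l.map f := by
  simp [List.attach_map_val]

lemma opts_add (G H : AGame) : (add G H).opts =
    G.opts.map (fun x => add x H) ++ H.opts.map (fun y => add G y) := by
  rw [add]; simp [opts, attach_map_fst]

lemma ppos_iff (G : AGame) : PPos G ↔ (G.act = false ∨ ∀ G' ∈ G.opts, ¬ PPos G') := by
  rw [PPos]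
  constructor
  · rintro (h | h)
    · exact Or.inl h
    · exact Or.inr fun G' hG' => h ⟨G', hG'⟩ (List.mem_attach _ _)
  · rintro (h | h)
    · exact Or.inl h
    · exact Or.inr fun G' _ => h G'.1 G'.2

lemma act_star (n : ℕ) : (star (fun _ => false) n).act = false := by
  rw [star]; rfl

lemma opts_star (γ : ℕ → Bool) (n : ℕ) :
    (star γ n).opts = (List.range n).map (star γ) := by
  rw [star]; simp [opts, attach_map_fst]

end AGame
namespace AGame

lemma typ_inactive_iff (G : AGame) : typ G = .inactive ↔ G.act = false := by
  unfold typ; split_ifs with h1 h2 <;> simp_all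

lemma typ_some_iff (G : AGame) :
    typ G = .activeSomeInactive ↔ G.act = true ∧ ∃ G' ∈ G.opts, G'.act = false := by
  unfold typ; split_ifs with h1 h2 <;> simp_all

lemma typ_all_iff (G : AGame) :
    typ G = .activeAllActive ↔ G.act = true ∧ ∀ G' ∈ G.opts, G'.act = true := by
  unfold typ; split_ifs with h1 h2
  · simp [h1]
  · constructor
    · intro h; cases h
    · rintro ⟨-, hall⟩
      obtain ⟨G', hG', ha⟩ := h2
      rw [hall G' hG'] at ha; cases ha
  · push_neg at h2
    constructor
    · intro _
      exact ⟨Bool.ne_false_iff.mp h1, fun G' hG' => Bool.ne_false_iff.mp (h2 G' hG')⟩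
    · intro _; rfl

/-- An active game with an inactive option summed with an inactive game is an N-position. -/
lemma notP_someInactive {G : AGame} (h1 : G.act = true) {G₀ : AGame}
    (h0 : G₀ ∈ G.opts) (ha : G₀.act = false) {X : AGame} (hX : X.act = false) :
    ¬ PPos (add G X) := by
  rw [ppos_iff]
  push_neg
  refine ⟨by simp [act_add, h1], add G₀ X, ?_, ?_⟩
  · rw [opts_add]
    exact List.mem_append_left _ (List.mem_map_of_mem h0)
  · rw [ppos_iff]
    exact Or.inl (by simp [act_add, ha, hX])

end AGame
namespace AGame

lemma mex_not_mem {S : Set ℕ} (h : S.Finite) : mex S ∉ S :=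
  Nat.sInf_mem h.infinite_compl.nonempty

lemma mex_le_of_not_mem {S : Set ℕ} {m : ℕ} (h : m ∉ S) : mex S ≤ m := Nat.sInf_le h

lemma mem_of_lt_mex {S : Set ℕ} {m : ℕ} (h : m < mex S) : m ∈ S := by
  by_contra hm
  exact absurd (mex_le_of_not_mem hm) (not_le.mpr h)

theorem main (G : AGame) (hact : G.act = true)
    (hall : ∀ G' ∈ G.opts, G'.act = true) :
    ∀ n : ℕ, (PPos (add G (star (fun _ => false) n)) ↔
      n = mex {m : ℕ | ∃ G' ∈ G.opts, typ G' = AType.activeAllActive ∧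
          m ∈ GSet (fun _ => false) G'}) := by
  set Z : ℕ → Bool := fun _ => false with hZ
  set S : Set ℕ := {m : ℕ | ∃ G' ∈ G.opts, typ G' = AType.activeAllActive ∧
      m ∈ GSet Z G'} with hSdef
  have hS : ∀ m : ℕ, m ∈ S ↔
      ∃ G' ∈ G.opts, typ G' = AType.activeAllActive ∧
        m = mex {k : ℕ | ∃ G'' ∈ G'.opts, typ G'' = AType.activeAllActive ∧
            k ∈ GSet Z G''} := by
    intro m
    rw [hSdef]
    simp only [Set.mem_setOf_eq]
    constructor
    · rintro ⟨G', hG', htyp, hm⟩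
      have h2 := (typ_all_iff G').mp htyp
      exact ⟨G', hG', htyp, (main G' h2.1 h2.2 m).mp hm⟩
    · rintro ⟨G', hG', htyp, hm⟩
      have h2 := (typ_all_iff G').mp htyp
      exact ⟨G', hG', htyp, (main G' h2.1 h2.2 m).mpr hm⟩
  have hfin : S.Finite := by
    apply Set.Finite.subset (Set.Finite.image
      (fun G' => mex {k : ℕ | ∃ G'' ∈ G'.opts, typ G'' = AType.activeAllActive ∧
          k ∈ GSet Z G''}) (List.finite_toSet G.opts))
    intro m hm
    obtain ⟨G', hG', -, hm⟩ := (hS m).mp hm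
    exact ⟨G', hG', hm.symm⟩
  have hmex_not : mex S ∉ S := mex_not_mem hfin
  -- characterize options of add G (star Z n)
  have hoptsiff : ∀ n : ℕ, PPos (add G (star Z n)) ↔
      ((∀ G' ∈ G.opts, ¬ PPos (add G' (star Z n))) ∧
       ∀ j < n, ¬ PPos (add G (star Z j))) := by
    intro n
    rw [ppos_iff]
    constructor
    · rintro (h | h)
      · rw [act_add, hact] at h; cases h
      · constructor
        · intro G' hG'
          apply h
          rw [opts_add]
          exact List.mem_append_left _ (List.mem_map_of_mem hG')
        · intro j hj
          apply h
          rw [opts_add]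
          refine List.mem_append_right _ ?_
          rw [opts_star]
          exact List.mem_map_of_mem
            (List.mem_map_of_mem (List.mem_range.mpr hj))
    · rintro ⟨h1, h2⟩
      right
      intro K hK
      rw [opts_add] at hK
      rcases List.mem_append.mp hK with hK | hK
      · obtain ⟨G', hG', rfl⟩ := List.mem_map.mp hK
        exact h1 G' hG'
      · obtain ⟨y, hy, rfl⟩ := List.mem_map.mp hK
        rw [opts_star] at hy
        obtain ⟨j, hj, rfl⟩ := List.mem_map.mp hy
        exact h2 j (List.mem_range.mp hj)
  have hGopt : ∀ n : ℕ, (∀ G' ∈ G.opts, ¬ PPos (add G' (star Z n))) ↔ n ∉ S := by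
    intro n
    constructor
    · intro h hn
      rw [hSdef] at hn
      obtain ⟨G', hG', htyp, hm⟩ := hn
      exact h G' hG' hm
    · intro hn G' hG' hP
      have ha := hall G' hG'
      by_cases hty : typ G' = AType.activeAllActive
      · exact hn (by rw [hSdef]; exact ⟨G', hG', hty, hP⟩)
      · have hex : ∃ G'' ∈ G'.opts, G''.act = false := by
          by_contra hno
          push_neg at hno
          exact hty ((typ_all_iff G').mpr
            ⟨ha, fun x hx => Bool.ne_false_iff.mp (hno x hx)⟩)
        obtain ⟨G'', hG'', ha''⟩ := hex
        exact notP_someInactive ha hG'' ha'' (act_star n) hP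
  intro n
  induction n using Nat.strong_induction_on with
  | _ n ih =>
    rw [hoptsiff n]
    constructor
    · rintro ⟨h1, h2⟩
      have hnS : n ∉ S := (hGopt n).mp h1
      have hle : mex S ≤ n := mex_le_of_not_mem hnS
      rcases lt_or_eq_of_le hle with hlt2 | heq
      · exact absurd ((ih (mex S) hlt2).mpr rfl) (h2 (mex S) hlt2)
      · exact heq.symm
    · rintro rfl
      refine ⟨(hGopt _).mpr hmex_not, fun j hj hP => ?_⟩
      have := (ih j hj).mp hP
      omega
termination_by sizeOf G
decreasing_by
  all_goals exact sizeOf_lt_of_mem hG'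

end AGame
/-- `𝒢^𝟘` according to the type of the game: `ℤ≥0` for inactive games, `∅` for active
games with an inactive option, and a mex-singleton for active games all of whose
options are active. -/
theorem AGame.gset_zeros (G : AGame) :
    (AGame.typ G = AGame.AType.inactive → AGame.GSet (fun _ => false) G = Set.univ) ∧
    (AGame.typ G = AGame.AType.activeSomeInactive → AGame.GSet (fun _ => false) G = ∅) ∧
    (AGame.typ G = AGame.AType.activeAllActive →
      AGame.GSet (fun _ => false) G =
        {AGame.mex {m : ℕ | ∃ G' ∈ G.opts, AGame.typ G' = AGame.AType.activeAllActive ∧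
            m ∈ AGame.GSet (fun _ => false) G'}}) := by
  refine ⟨?_, ?_, ?_⟩
  · intro h
    rw [AGame.typ_inactive_iff] at h
    ext n
    simp only [Set.mem_univ, iff_true, AGame.GSet, Set.mem_setOf_eq]
    rw [AGame.ppos_iff]
    exact Or.inl (by simp [AGame.act_add, h, AGame.act_star])
  · intro h
    rw [AGame.typ_some_iff] at h
    obtain ⟨h1, G₀, h0, ha⟩ := h
    ext n
    simp only [Set.mem_empty_iff_false, iff_false, AGame.GSet, Set.mem_setOf_eq]
    exact AGame.notP_someInactive h1 h0 ha (AGame.act_star n)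
  · intro h
    have h2 := (AGame.typ_all_iff G).mp h
    ext n
    simp only [Set.mem_singleton_iff, AGame.GSet, Set.mem_setOf_eq]
    exact AGame.main G h2.1 h2.2 n
end

section
/- Simplification Theorem: suppose G^g is covered by H^h (every option of G^g is equivalent to some option of H^h). Then G^g = H^h if and only if (b1) type(G^g) = type(H^h) and (b2) every option H'^{h'} of H^h that is uncovered by G^g (i.e., not equivalent to any option of G^g) has an option H''^{h''} with H''^{h''} = G^g. -/
namespace AGame

lemma opts_mk (l : List AGame) (b : Bool) : (mk l b).opts = l := rfl
lemma act_mk (l : List AGame) (b : Bool) : (mk l b).act = b := rfl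

lemma mem_opts_add {Y G H : AGame} :
    Y ∈ (add G H).opts ↔ (∃ G' ∈ G.opts, Y = add G' H) ∨ (∃ H' ∈ H.opts, Y = add G H') := by
  rw [add]
  simp only [opts, List.mem_append, List.mem_map, List.mem_attach, true_and]
  constructor
  · rintro (⟨⟨a,ha⟩,rfl⟩|⟨⟨a,ha⟩,rfl⟩)
    · exact Or.inl ⟨a, ha, rfl⟩
    · exact Or.inr ⟨a, ha, rfl⟩
  · rintro (⟨a,ha,rfl⟩|⟨a,ha,rfl⟩)
    · exact Or.inl ⟨⟨a,ha⟩, rfl⟩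
    · exact Or.inr ⟨⟨a,ha⟩, rfl⟩

lemma not_ppos_iff (G : AGame) : ¬ PPos G ↔ (G.act = true ∧ ∃ G' ∈ G.opts, PPos G') := by
  rw [ppos_iff]
  push_neg
  simp

end AGame

namespace AGame

lemma strong_ind (P : AGame → Prop) (ih : ∀ G, (∀ G', sizeOf G' < sizeOf G → P G') → P G) :
    ∀ G, P G := by
  intro G
  generalize hn : sizeOf G = n
  induction n using Nat.strong_induction_on generalizing G with
  | _ n IH => subst hn; exact ih G (fun G' h => IH _ h G' rfl)

/-- Fully activated copy of a game. -/
def actify (G : AGame) : AGame :=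
  mk (G.opts.attach.map fun x => actify x.1) true
termination_by sizeOf G
decreasing_by have := sizeOf_lt_of_mem x.2; omega

lemma act_actify (G : AGame) : (actify G).act = true := by rw [actify]; rfl

lemma mem_opts_actify {Y G : AGame} :
    Y ∈ (actify G).opts ↔ ∃ G' ∈ G.opts, Y = actify G' := by
  rw [actify]
  simp only [opts, List.mem_map, List.mem_attach, true_and]
  constructor
  · rintro ⟨⟨a,ha⟩,rfl⟩; exact ⟨a, ha, rfl⟩
  · rintro ⟨a,ha,rfl⟩; exact ⟨⟨a,ha⟩, rfl⟩

/-- mirror lemma -/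
lemma ppos_add_self : ∀ J, PPos (add J J) := by
  refine strong_ind _ (fun J IH => ?_)
  by_cases hJ : J.act = false
  · exact (ppos_iff _).2 (Or.inl (by rw [act_add, hJ]; rfl))
  · refine (ppos_iff _).2 (Or.inr ?_)
    intro Y hY
    rcases mem_opts_add.1 hY with ⟨J', hJ', rfl⟩ | ⟨J', hJ', rfl⟩
    · refine (not_ppos_iff _).2 ⟨by rw [act_add]; simp [show J.act = true from by simpa using hJ], ?_⟩
      exact ⟨add J' J', mem_opts_add.2 (Or.inr ⟨J', hJ', rfl⟩),
        IH J' (sizeOf_lt_of_mem hJ')⟩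
    · refine (not_ppos_iff _).2 ⟨by rw [act_add]; simp [show J.act = true from by simpa using hJ], ?_⟩
      exact ⟨add J' J', mem_opts_add.2 (Or.inl ⟨J', hJ', rfl⟩),
        IH J' (sizeOf_lt_of_mem hJ')⟩

/-- activated-mirror lemma -/
lemma ppos_add_actify_self : ∀ W, PPos (add W (actify W)) := by
  refine strong_ind _ (fun W IH => ?_)
  refine (ppos_iff _).2 (Or.inr ?_)
  intro Y hY
  rcases mem_opts_add.1 hY with ⟨W', hW', rfl⟩ | ⟨z, hz, rfl⟩
  · refine (not_ppos_iff _).2 ⟨by rw [act_add, act_actify]; simp, ?_⟩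
    exact ⟨add W' (actify W'),
      mem_opts_add.2 (Or.inr ⟨actify W', mem_opts_actify.2 ⟨W', hW', rfl⟩, rfl⟩),
      IH W' (sizeOf_lt_of_mem hW')⟩
  · rcases mem_opts_actify.1 hz with ⟨W', hW', rfl⟩
    refine (not_ppos_iff _).2 ⟨by rw [act_add, act_actify]; simp, ?_⟩
    exact ⟨add W' (actify W'), mem_opts_add.2 (Or.inl ⟨W', hW', rfl⟩),
      IH W' (sizeOf_lt_of_mem hW')⟩

/-- adding the empty inactive game does not change the outcome. -/
lemma ppos_add_zero : ∀ G, PPos (add G (mk [] false)) ↔ PPos G := by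
  refine strong_ind _ (fun G IH => ?_)
  rw [ppos_iff (add _ _), ppos_iff G, act_add]
  simp only [act_mk, Bool.or_false]
  constructor
  · rintro (h | h)
    · exact Or.inl h
    · refine Or.inr (fun G' hG' hP => h (add G' (mk [] false))
        (mem_opts_add.2 (Or.inl ⟨G', hG', rfl⟩)) ?_)
      exact (IH G' (sizeOf_lt_of_mem hG')).2 hP
  · rintro (h | h)
    · exact Or.inl h
    · refine Or.inr (fun Y hY => ?_)
      rcases mem_opts_add.1 hY with ⟨G', hG', rfl⟩ | ⟨Z, hZ, rfl⟩
      · exact fun hP => h G' hG' ((IH G' (sizeOf_lt_of_mem hG')).1 hP)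
      · simp [opts] at hZ

end AGame

namespace AGame

lemma sepstep (U V Z : AGame) (h1 : PPos (add V Z)) (h2 : ¬ PPos (add U Z)) :
    ∃ A : AGame, A.act = true ∧ PPos (add U A) ∧ ¬ PPos (add V A) := by
  refine ⟨mk ((U.opts.attach.map fun u => actify u.1) ++ [Z]) true, rfl, ?_, ?_⟩
  · refine (ppos_iff _).2 (Or.inr ?_)
    intro Y hY
    rcases mem_opts_add.1 hY with ⟨U', hU', rfl⟩ | ⟨z, hz, rfl⟩
    · refine (not_ppos_iff _).2 ⟨by rw [act_add]; simp [act_mk], ?_⟩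
      refine ⟨add U' (actify U'), mem_opts_add.2 (Or.inr ⟨actify U', ?_, rfl⟩),
        ppos_add_actify_self U'⟩
      simp only [opts_mk, List.mem_append, List.mem_map, List.mem_attach, true_and]
      exact Or.inl ⟨⟨U', hU'⟩, rfl⟩
    · simp only [opts_mk, List.mem_append, List.mem_map, List.mem_attach, true_and,
        List.mem_singleton] at hz
      rcases hz with ⟨⟨U', hU'⟩, rfl⟩ | rfl
      · refine (not_ppos_iff _).2 ⟨by rw [act_add, act_actify]; simp, ?_⟩
        exact ⟨add U' (actify U'), mem_opts_add.2 (Or.inl ⟨U', hU', rfl⟩),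
          ppos_add_actify_self U'⟩
      · exact h2
  · refine (not_ppos_iff _).2 ⟨by rw [act_add]; simp [act_mk], ?_⟩
    refine ⟨add V Z, mem_opts_add.2 (Or.inr ⟨Z, ?_, rfl⟩), h1⟩
    simp [opts_mk]

lemma sep (U V : AGame) (h : ¬ Equiv U V) :
    ∃ A : AGame, A.act = true ∧ PPos (add U A) ∧ ¬ PPos (add V A) := by
  rw [Equiv] at h
  push_neg at h
  obtain ⟨T, hT⟩ := h
  rcases hT with ⟨hUT, hVT⟩ | ⟨hUT, hVT⟩
  · obtain ⟨B, hBact, hVB, hUB⟩ := sepstep V U T hUT hVT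
    exact sepstep U V B hVB hUB
  · exact sepstep U V T hVT hUT

/-- act is an invariant of Equiv. -/
lemma act_eq_of_equiv {G H : AGame} (h : Equiv G H) : G.act = H.act := by
  have key : ∀ G H : AGame, Equiv G H → G.act = true → H.act = false → False := by
    intro G H h hG hH
    by_cases hP : PPos G
    · -- X = {0}^0
      set X : AGame := mk [mk [] false] false with hX
      have h1 : ¬ PPos (add G X) := by
        refine (not_ppos_iff _).2 ⟨by rw [act_add, hG]; rfl, ?_⟩
        exact ⟨add G (mk [] false),
          mem_opts_add.2 (Or.inr ⟨mk [] false, by simp [hX, opts_mk], rfl⟩),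
          (ppos_add_zero G).2 hP⟩
      have h2 : PPos (add H X) := (ppos_iff _).2 (Or.inl (by rw [act_add, hH]; rfl))
      exact h1 ((h X).2 h2)
    · have h1 : ¬ PPos (add G (mk [] false)) := fun hc => hP ((ppos_add_zero G).1 hc)
      have h2 : PPos (add H (mk [] false)) :=
        (ppos_iff _).2 (Or.inl (by rw [act_add, hH]; rfl))
      exact h1 ((h (mk [] false)).2 h2)
  have hsymm : Equiv H G := fun X => (h X).symm
  cases hG : G.act <;> cases hH : H.act
  · rfl
  · exact (key H G hsymm hH hG).elim
  · exact (key G H h hG hH).elim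
  · rfl

/-- all-options-active game paired with its deactivated copy is a P-position. -/
lemma ppos_add_deact (G : AGame) (hact : G.act = true)
    (hall : ∀ G' ∈ G.opts, G'.act = true) :
    PPos (add G (mk G.opts false)) := by
  refine (ppos_iff _).2 (Or.inr ?_)
  intro Y hY
  rcases mem_opts_add.1 hY with ⟨G', hG', rfl⟩ | ⟨x, hx, rfl⟩
  · refine (not_ppos_iff _).2 ⟨by rw [act_add, hall G' hG']; rfl, ?_⟩
    exact ⟨add G' G', mem_opts_add.2 (Or.inr ⟨G', hG', rfl⟩), ppos_add_self G'⟩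
  · simp only [opts_mk] at hx
    refine (not_ppos_iff _).2 ⟨by rw [act_add, hact]; rfl, ?_⟩
    exact ⟨add x x, mem_opts_add.2 (Or.inl ⟨x, hx, rfl⟩), ppos_add_self x⟩

/-- existence of inactive options is an invariant of Equiv (for active games). -/
lemma inact_opt_of_equiv {G H : AGame} (h : Equiv G H) (hG : G.act = true)
    (hH : H.act = true) (hex : ∃ G₀ ∈ G.opts, G₀.act = false) :
    ∃ H₀ ∈ H.opts, H₀.act = false := by
  by_contra hall
  push_neg at hall
  simp only [Bool.not_eq_false] at hall
  obtain ⟨G₀, hG₀, hG₀a⟩ := hex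
  set X : AGame := mk H.opts false with hX
  have h2 : PPos (add H X) := ppos_add_deact H hH hall
  have h1 : ¬ PPos (add G X) := by
    refine (not_ppos_iff _).2 ⟨by rw [act_add, hG]; rfl, ?_⟩
    refine ⟨add G₀ X, mem_opts_add.2 (Or.inl ⟨G₀, hG₀, rfl⟩), ?_⟩
    exact (ppos_iff _).2 (Or.inl (by rw [act_add, hG₀a]; rfl))
  exact h1 ((h X).2 h2)

/-- typ is an invariant of Equiv. -/
lemma typ_eq_of_equiv {G H : AGame} (h : Equiv G H) : typ G = typ H := by
  have hact := act_eq_of_equiv h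
  have hsymm : Equiv H G := fun X => (h X).symm
  rw [typ, typ]
  cases hGa : G.act with
  | false => rw [hGa] at hact; rw [← hact]; simp
  | true =>
    rw [hGa] at hact
    rw [← hact]
    simp only [Bool.true_eq_false, if_false]
    by_cases hex : ∃ G' ∈ G.opts, G'.act = false
    · have := inact_opt_of_equiv h hGa hact.symm hex
      rw [if_pos hex, if_pos this]
    · have : ¬ ∃ H' ∈ H.opts, H'.act = false := by
        intro hex'
        exact hex (inact_opt_of_equiv hsymm hact.symm hGa hex')
      rw [if_neg hex, if_neg this]

end AGame

namespace AGame

lemma act_eq_of_typ_eq {G H : AGame} (hT : typ G = typ H) : G.act = H.act := by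
  cases hG : G.act <;> cases hH : H.act <;>
    simp only [typ, hG, hH, Bool.true_eq_false, if_true, if_false] at hT ⊢ <;>
    first
      | rfl
      | (split_ifs at hT <;> simp_all)

lemma inact_iff_of_typ_eq {G H : AGame} (hT : typ G = typ H) (hGa : G.act = true)
    (hHa : H.act = true) :
    (∃ G' ∈ G.opts, G'.act = false) ↔ (∃ H' ∈ H.opts, H'.act = false) := by
  simp only [typ, hGa, hHa, Bool.true_eq_false, if_false] at hT
  by_cases h1 : ∃ G' ∈ G.opts, G'.act = false <;>
    by_cases h2 : ∃ H' ∈ H.opts, H'.act = false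
  · exact iff_of_true h1 h2
  · rw [if_pos h1, if_neg h2] at hT; cases hT
  · rw [if_neg h1, if_pos h2] at hT; cases hT
  · exact iff_of_false h1 h2

/-- The backward direction of the simplification theorem. -/
lemma equiv_of_cov (G H : AGame) (hcov : Covered G H) (hT : typ G = typ H)
    (hR : ∀ H' ∈ H.opts, (∀ G' ∈ G.opts, ¬ Equiv G' H') → ∃ H'' ∈ H'.opts, Equiv H'' G) :
    Equiv G H := by
  have hact : G.act = H.act := act_eq_of_typ_eq hT
  intro X
  refine strong_ind (fun X => PPos (add G X) ↔ PPos (add H X)) (fun X IH => ?_) X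
  by_cases hboth : G.act = false ∧ X.act = false
  · constructor <;> intro _ <;>
      exact (ppos_iff _).2 (Or.inl (by rw [act_add]; simp [hboth.1, hboth.2, ← hact]))
  · have hor : (G.act || X.act) = true := by
      rcases hboth' : G.act <;> rcases hX : X.act <;> simp_all
    constructor
    · intro hP
      have hopt : ∀ Y ∈ (add G X).opts, ¬ PPos Y := by
        rcases (ppos_iff _).1 hP with hc | hc
        · rw [act_add, hor] at hc; exact absurd hc (by simp)
        · exact hc
      refine (ppos_iff _).2 (Or.inr ?_)
      intro Y hY
      rcases mem_opts_add.1 hY with ⟨H', hH', rfl⟩ | ⟨X', hX', rfl⟩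
      · by_cases hc : ∃ G' ∈ G.opts, Equiv G' H'
        · obtain ⟨G', hG', hE⟩ := hc
          exact fun hPP => hopt (add G' X) (mem_opts_add.2 (Or.inl ⟨G', hG', rfl⟩))
            ((hE X).2 hPP)
        · push_neg at hc
          obtain ⟨H'', hH'', hE⟩ := hR H' hH' hc
          refine (not_ppos_iff _).2 ⟨?_, add H'' X,
            mem_opts_add.2 (Or.inl ⟨H'', hH'', rfl⟩), (hE X).2 hP⟩
          rw [act_add]
          by_cases hH'a : H'.act = true
          · simp [hH'a]
          · simp only [Bool.not_eq_true] at hH'a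
            cases hXa : X.act
            · -- X inactive, H' inactive: derive contradiction
              exfalso
              rw [hXa] at hor
              simp only [Bool.or_false] at hor
              have hHa : H.act = true := hact ▸ hor
              have hexH : ∃ H₀ ∈ H.opts, H₀.act = false := ⟨H', hH', hH'a⟩
              obtain ⟨G₀, hG₀, hG₀a⟩ := (inact_iff_of_typ_eq hT hor hHa).2 hexH
              refine hopt (add G₀ X) (mem_opts_add.2 (Or.inl ⟨G₀, hG₀, rfl⟩)) ?_
              exact (ppos_iff _).2 (Or.inl (by rw [act_add, hG₀a, hXa]; rfl))
            · simp
      · exact fun hPP => hopt (add G X') (mem_opts_add.2 (Or.inr ⟨X', hX', rfl⟩))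
          ((IH X' (sizeOf_lt_of_mem hX')).2 hPP)
    · intro hP
      have hopt : ∀ Y ∈ (add H X).opts, ¬ PPos Y := by
        rcases (ppos_iff _).1 hP with hc | hc
        · rw [act_add, ← hact, hor] at hc; exact absurd hc (by simp)
        · exact hc
      refine (ppos_iff _).2 (Or.inr ?_)
      intro Y hY
      rcases mem_opts_add.1 hY with ⟨G', hG', rfl⟩ | ⟨X', hX', rfl⟩
      · obtain ⟨H', hH', hE⟩ := hcov G' hG'
        exact fun hPP => hopt (add H' X) (mem_opts_add.2 (Or.inl ⟨H', hH', rfl⟩))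
          ((hE X).1 hPP)
      · exact fun hPP => hopt (add H X') (mem_opts_add.2 (Or.inr ⟨X', hX', rfl⟩))
          ((IH X' (sizeOf_lt_of_mem hX')).1 hPP)

/-- The forward direction: uncovered options reverse out to `G`. -/
lemma rev_of_equiv (G H : AGame) (h : Equiv G H) (H' : AGame) (hH' : H' ∈ H.opts)
    (hunc : ∀ G' ∈ G.opts, ¬ Equiv G' H') : ∃ H'' ∈ H'.opts, Equiv H'' G := by
  by_contra hno
  push_neg at hno
  have sep1 : ∀ g ∈ G.opts, ∃ A : AGame, A.act = true ∧ PPos (add g A) ∧ ¬ PPos (add H' A) :=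
    fun g hg => sep g H' (hunc g hg)
  have sep2 : ∀ k ∈ H'.opts, ∃ B : AGame, B.act = true ∧ PPos (add k B) ∧ ¬ PPos (add G B) :=
    fun k hk => sep k G (hno k hk)
  choose α hαact hα1 hα2 using sep1
  choose β hβact hβ1 hβ2 using sep2
  set X : AGame := mk ((G.opts.attach.map fun g => α g.1 g.2) ++
    (H'.opts.attach.map fun k => β k.1 k.2)) true with hXdef
  have hXact : X.act = true := rfl
  have hmem : ∀ z : AGame, z ∈ X.opts ↔
      ((∃ g, ∃ hg : g ∈ G.opts, z = α g hg) ∨ (∃ k, ∃ hk : k ∈ H'.opts, z = β k hk)) := by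
    intro z
    simp only [hXdef, opts_mk, List.mem_append, List.mem_map, List.mem_attach, true_and]
    constructor
    · rintro (⟨⟨a,ha⟩,rfl⟩|⟨⟨a,ha⟩,rfl⟩)
      · exact Or.inl ⟨a, ha, rfl⟩
      · exact Or.inr ⟨a, ha, rfl⟩
    · rintro (⟨a,ha,rfl⟩|⟨a,ha,rfl⟩)
      · exact Or.inl ⟨⟨a,ha⟩, rfl⟩
      · exact Or.inr ⟨⟨a,ha⟩, rfl⟩
  have hGX : PPos (add G X) := by
    refine (ppos_iff _).2 (Or.inr ?_)
    intro Y hY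
    rcases mem_opts_add.1 hY with ⟨g, hg, rfl⟩ | ⟨z, hz, rfl⟩
    · refine (not_ppos_iff _).2 ⟨by rw [act_add, hXact]; simp, ?_⟩
      exact ⟨add g (α g hg), mem_opts_add.2 (Or.inr ⟨α g hg, (hmem _).2 (Or.inl ⟨g, hg, rfl⟩), rfl⟩),
        hα1 g hg⟩
    · rcases (hmem z).1 hz with ⟨g, hg, rfl⟩ | ⟨k, hk, rfl⟩
      · refine (not_ppos_iff _).2 ⟨by rw [act_add, hαact]; simp, ?_⟩
        exact ⟨add g (α g hg), mem_opts_add.2 (Or.inl ⟨g, hg, rfl⟩), hα1 g hg⟩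
      · exact hβ2 k hk
  have hH'X : PPos (add H' X) := by
    refine (ppos_iff _).2 (Or.inr ?_)
    intro Y hY
    rcases mem_opts_add.1 hY with ⟨k, hk, rfl⟩ | ⟨z, hz, rfl⟩
    · refine (not_ppos_iff _).2 ⟨by rw [act_add, hXact]; simp, ?_⟩
      exact ⟨add k (β k hk), mem_opts_add.2 (Or.inr ⟨β k hk, (hmem _).2 (Or.inr ⟨k, hk, rfl⟩), rfl⟩),
        hβ1 k hk⟩
    · rcases (hmem z).1 hz with ⟨g, hg, rfl⟩ | ⟨k, hk, rfl⟩
      · exact hα2 g hg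
      · refine (not_ppos_iff _).2 ⟨by rw [act_add, hβact]; simp, ?_⟩
        exact ⟨add k (β k hk), mem_opts_add.2 (Or.inl ⟨k, hk, rfl⟩), hβ1 k hk⟩
  have hHX : ¬ PPos (add H X) := by
    refine (not_ppos_iff _).2 ⟨by rw [act_add, hXact]; simp, ?_⟩
    exact ⟨add H' X, mem_opts_add.2 (Or.inl ⟨H', hH', rfl⟩), hH'X⟩
  exact hHX ((h X).1 hGX)

end AGame


/-- Simplification Theorem. -/
theorem AGame.simplification (G H : AGame) (hcov : AGame.Covered G H) :
    AGame.Equiv G H ↔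
      (AGame.typ G = AGame.typ H ∧
        ∀ H' ∈ H.opts, (∀ G' ∈ G.opts, ¬ AGame.Equiv G' H') →
          ∃ H'' ∈ H'.opts, AGame.Equiv H'' G) := by
  constructor
  · intro h
    exact ⟨AGame.typ_eq_of_equiv h, fun H' hH' hunc => AGame.rev_of_equiv G H h H' hH' hunc⟩
  · rintro ⟨hT, hR⟩
    exact AGame.equiv_of_cov G H hcov hT hR
end
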